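/- Let L > 0 and let λ ∈ ℂ and φ ∈ H³(0, L) satisfy φ(0) = φ(L) = φ'(0) = 0 and −φ''' − φ' = λφ on (0, L) (i.e., φ is an eigenfunction of the adjoint linearized KdV operator). If additionally φ'(L) = 0, and L ∉ N = { 2π √((k² + kl + l²)/3) : k, l ∈ ℕ_{≥1} }, thenter φ ≡ 0 on (0, L). -/

import Mathlib

open Set Polynomial

/-- The set of critical lengths for the linearized KdV equation. -/
def criticalSet : Set ℝ :=
  {x | ∃ k l : ℕ, 0 < k ∧ 0 < l ∧
    x = 2 * Real.pi * Real.sqrt (((k : ℝ) ^ 2 + k * l + l ^ 2) / 3)}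

section Aux

lemma key_unique (lam : ℂ) {L : ℝ} (f1 f2 f3 g1 g2 g3 : ℝ → ℂ)
    (hf1 : ∀ x, HasDerivAt f1 (f2 x) x) (hf2 : ∀ x, HasDerivAt f2 (f3 x) x)
    (hf3 : ∀ x ∈ Icc (0:ℝ) L, HasDerivAt f3 (-f2 x - lam * f1 x) x)
    (hg1 : ∀ x, HasDerivAt g1 (g2 x) x) (hg2 : ∀ x, HasDerivAt g2 (g3 x) x)
    (hg3 : ∀ x ∈ Icc (0:ℝ) L, HasDerivAt g3 (-g2 x - lam * g1 x) x)
    (h01 : f1 0 = g1 0) (h02 : f2 0 = g2 0) (h03 : f3 0 = g3 0) :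
    ∀ x ∈ Icc (0:ℝ) L, f1 x = g1 x ∧ f2 x = g2 x := by
  classical
  set pr1 := ContinuousLinearMap.fst ℂ ℂ (ℂ × ℂ)
  set pr2 := ContinuousLinearMap.snd ℂ ℂ (ℂ × ℂ)
  set pr21 := (ContinuousLinearMap.fst ℂ ℂ ℂ).comp pr2
  set pr22 := (ContinuousLinearMap.snd ℂ ℂ ℂ).comp pr2
  set T : (ℂ × ℂ × ℂ) →L[ℂ] (ℂ × ℂ × ℂ) := pr21.prod (pr22.prod (-pr21 - lam • pr1)) with hT
  have hTapp : ∀ p : ℂ × ℂ × ℂ, T p = (p.2.1, p.2.2, -p.2.1 - lam * p.1) := by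
    intro p
    simp [hT, pr21, pr22, pr1, pr2, ContinuousLinearMap.prod_apply, smul_eq_mul]
  set F : ℝ → ℂ × ℂ × ℂ := fun x => (f1 x, f2 x, f3 x) with hF
  set G : ℝ → ℂ × ℂ × ℂ := fun x => (g1 x, g2 x, g3 x) with hG
  have hFd : ∀ x ∈ Icc (0:ℝ) L, HasDerivAt F (T (F x)) x := by
    intro x hx
    rw [hTapp]
    exact (hf1 x).prodMk ((hf2 x).prodMk (hf3 x hx))
  have hGd : ∀ x ∈ Icc (0:ℝ) L, HasDerivAt G (T (G x)) x := by
    intro x hx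
    rw [hTapp]
    exact (hg1 x).prodMk ((hg2 x).prodMk (hg3 x hx))
  have key : EqOn F G (Icc 0 L) := by
    apply ODE_solution_unique (v := fun _ p => T p) (K := ‖T‖₊)
    · intro _; exact T.lipschitz
    · exact fun x hx => (hFd x hx).continuousAt.continuousWithinAt
    · exact fun x hx => (hFd x (Ico_subset_Icc_self hx)).hasDerivWithinAt
    · exact fun x hx => (hGd x hx).continuousAt.continuousWithinAt
    · exact fun x hx => (hGd x (Ico_subset_Icc_self hx)).hasDerivWithinAt
    · simp only [hF, hG, h01, h02, h03]
  intro x hx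
  have := key hx
  exact ⟨congrArg Prod.fst this, congrArg (fun p => p.2.1) this⟩

lemma cubic_factor (lam : ℂ) :
    ∃ r1 r2 r3 : ℂ, ∀ z : ℂ, z ^ 3 + z + lam = (z - r1) * (z - r2) * (z - r3) := by
  set p : ℂ[X] := X ^ 3 + (X + C lam) with hp
  have hlow : (X + C lam : ℂ[X]).degree < 3 := by
    have h1 : (X : ℂ[X]).degree ≤ 1 := degree_X_le
    have h2 : (C lam).degree ≤ 1 := le_trans degree_C_le (by norm_num)
    calc (X + C lam).degree ≤ max (X : ℂ[X]).degree (C lam).degree := degree_add_le _ _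
      _ ≤ 1 := by simp [h1, h2]
      _ < 3 := by norm_num
  have hmonic : p.Monic := monic_X_pow_add (by exact_mod_cast hlow)
  have hdeg : p.natDegree = 3 := by
    have hd : p.degree = 3 := by
      rw [hp, degree_add_eq_left_of_degree_lt (by simpa [degree_X_pow] using hlow)]
      exact degree_X_pow 3
    exact natDegree_eq_of_degree_eq_some hd
  have hsplits : Splits p := IsAlgClosed.splits p
  have hcard : Multiset.card p.roots = 3 := by
    rw [splits_iff_card_roots.mp hsplits, hdeg]
  obtain ⟨r1, r2, r3, hr⟩ := Multiset.card_eq_three.mp hcard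
  refine ⟨r1, r2, r3, fun z => ?_⟩
  have := hsplits.eq_prod_roots_of_monic hmonic
  have hev := congrArg (eval z) this
  rw [hr] at hev
  simp only [hp, eval_add, eval_pow, eval_X, eval_C] at hev
  rw [show z ^ 3 + z + lam = z ^ 3 + (z + lam) by ring, hev]
  simp [Multiset.insert_eq_cons]
  ring

lemma mixed_pair (k l : ℤ) (hk : 0 < k) (hl : l < 0) (hkl : k + l ≠ 0) :
    ∃ a b : ℕ, 0 < a ∧ 0 < b ∧ k ^ 2 + k * l + l ^ 2 = (a : ℤ) ^ 2 + a * b + b ^ 2 := by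
  rcases lt_or_gt_of_ne hkl with h | h
  · refine ⟨(-(k + l)).toNat, k.toNat, ?_, ?_, ?_⟩
    · simp only [Int.lt_toNat]; omega
    · simp only [Int.lt_toNat]; omega
    · have e1 : ((-(k + l)).toNat : ℤ) = -(k + l) := Int.toNat_of_nonneg (by omega)
      have e2 : ((k).toNat : ℤ) = k := Int.toNat_of_nonneg (by omega)
      rw [e1, e2]; ring
  · refine ⟨(k + l).toNat, (-l).toNat, ?_, ?_, ?_⟩
    · simp only [Int.lt_toNat]; omega
    · simp only [Int.lt_toNat]; omega
    · have e1 : (((k + l)).toNat : ℤ) = k + l := Int.toNat_of_nonneg (by omega)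
      have e2 : ((-l).toNat : ℤ) = -l := Int.toNat_of_nonneg (by omega)
      rw [e1, e2]; ring

lemma int_pair (k l : ℤ) (hk : k ≠ 0) (hl : l ≠ 0) (hkl : k + l ≠ 0) :
    ∃ a b : ℕ, 0 < a ∧ 0 < b ∧ k ^ 2 + k * l + l ^ 2 = (a : ℤ) ^ 2 + a * b + b ^ 2 := by
  rcases lt_or_gt_of_ne hk with hk' | hk' <;> rcases lt_or_gt_of_ne hl with hl' | hl'
  · refine ⟨(-k).toNat, (-l).toNat, ?_, ?_, ?_⟩
    · simp only [Int.lt_toNat]; omega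
    · simp only [Int.lt_toNat]; omega
    · have e1 : ((-k).toNat : ℤ) = -k := Int.toNat_of_nonneg (by omega)
      have e2 : ((-l).toNat : ℤ) = -l := Int.toNat_of_nonneg (by omega)
      rw [e1, e2]; ring
  · obtain ⟨a, b, ha, hb, h⟩ := mixed_pair l k hl' hk' (by omega)
    exact ⟨a, b, ha, hb, by linarith [h]⟩
  · exact mixed_pair k l hk' hl' hkl
  · refine ⟨k.toNat, l.toNat, ?_, ?_, ?_⟩
    · simp only [Int.lt_toNat]; omega
    · simp only [Int.lt_toNat]; omega
    · have e1 : ((k).toNat : ℤ) = k := Int.toNat_of_nonneg (by omega)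
      have e2 : ((l).toNat : ℤ) = l := Int.toNat_of_nonneg (by omega)
      rw [e1, e2]

lemma hasDerivAt_ofReal (x : ℝ) : HasDerivAt (fun y : ℝ => (y : ℂ)) 1 x := by
  exact Complex.ofRealCLM.hasDerivAt

lemma hasDerivAt_affine (A B : ℂ) (x : ℝ) :
    HasDerivAt (fun y : ℝ => A + B * (y : ℂ)) B x := by
  simpa using ((hasDerivAt_ofReal x).const_mul B).const_add A

lemma hasDerivAt_cexp_mul (r : ℂ) (x : ℝ) :
    HasDerivAt (fun y : ℝ => Complex.exp (r * y)) (r * Complex.exp (r * x)) x := by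
  have h1 : HasDerivAt (fun y : ℝ => r * (y : ℂ)) r x := by
    simpa using (hasDerivAt_ofReal x).const_mul r
  simpa [mul_comm] using h1.cexp

end Aux

section DoubleRoot

/-- The repeated-root case: no nontrivial solution exists, i.e. `φ''(0) = 0`. -/
lemma double_case {L : ℝ} (hL : 0 < L) (lam : ℂ) (φ : ℝ → ℂ)
    (hf1 : ∀ x, HasDerivAt φ (deriv φ x) x)
    (hf2 : ∀ x, HasDerivAt (deriv φ) (deriv (deriv φ) x) x)
    (hf3 : ∀ x ∈ Icc (0:ℝ) L, HasDerivAt (deriv (deriv φ)) (-(deriv φ x) - lam * φ x) x)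
    (h0 : φ 0 = 0) (hd0 : deriv φ 0 = 0) (hLv : φ L = 0) (hdL : deriv φ L = 0)
    (w r : ℂ) (hsum : w + r + r = 0) (hq : w * r + w * r + r * r = 1)
    (hrw : w ^ 3 + w + lam = 0) (hrr : r ^ 3 + r + lam = 0) :
    deriv (deriv φ) 0 = 0 := by
  by_contra ha
  set a := deriv (deriv φ) 0 with haa
  have h3r2 : (3 : ℂ) * r ^ 2 = -1 := by linear_combination 2 * r * hsum - hq
  have hwr : w - r ≠ 0 := by
    intro h
    have hr0 : r = 0 := by linear_combination hsum / 3 - h / 3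
    rw [hr0] at h3r2; norm_num at h3r2
  set c1 : ℂ := a / (w - r) ^ 2 with hc1
  have hc1sq : c1 * (w - r) ^ 2 = a := by
    rw [hc1]; field_simp
  set g1 : ℝ → ℂ := fun x => c1 * Complex.exp (w * x) +
      (-c1 + c1 * (r - w) * x) * Complex.exp (r * x) with hg1def
  set g2 : ℝ → ℂ := fun x => c1 * w * Complex.exp (w * x) +
      (r * (-c1 + c1 * (r - w) * x) + c1 * (r - w)) * Complex.exp (r * x) with hg2def
  set g3 : ℝ → ℂ := fun x => c1 * w ^ 2 * Complex.exp (w * x) +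
      (r ^ 2 * (-c1 + c1 * (r - w) * x) + 2 * r * (c1 * (r - w))) * Complex.exp (r * x) with hg3def
  have hlin : ∀ x : ℝ, HasDerivAt (fun y : ℝ => -c1 + c1 * (r - w) * (y : ℂ)) (c1 * (r - w)) x :=
    fun x => hasDerivAt_affine (-c1) (c1 * (r - w)) x
  have hg1 : ∀ x, HasDerivAt g1 (g2 x) x := by
    intro x
    have h1 := (hasDerivAt_cexp_mul w x).const_mul c1
    have h2 := (hlin x).mul (hasDerivAt_cexp_mul r x)
    convert h1.add h2 using 1
    · rfl
    · rfl
    simp [hg2def]; ring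
  have hg2 : ∀ x, HasDerivAt g2 (g3 x) x := by
    intro x
    have h1 := (hasDerivAt_cexp_mul w x).const_mul (c1 * w)
    have hlin2 : HasDerivAt (fun y : ℝ => r * (-c1 + c1 * (r - w) * (y : ℂ)) + c1 * (r - w))
        (r * (c1 * (r - w))) x := by
      have hfe : (fun y : ℝ => r * (-c1 + c1 * (r - w) * (y : ℂ)) + c1 * (r - w)) =
          (fun y : ℝ => (r * (-c1) + c1 * (r - w)) + (r * (c1 * (r - w))) * (y : ℂ)) := by
        funext y; ring
      rw [hfe]
      exact hasDerivAt_affine _ _ x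
    have h2 := hlin2.mul (hasDerivAt_cexp_mul r x)
    convert h1.add h2 using 1
    · rfl
    · rfl
    simp [hg3def]; ring
  have hg3 : ∀ x ∈ Icc (0:ℝ) L, HasDerivAt g3 (-g2 x - lam * g1 x) x := by
    intro x _
    have h1 := (hasDerivAt_cexp_mul w x).const_mul (c1 * w ^ 2)
    have hlin3 : HasDerivAt
        (fun y : ℝ => r ^ 2 * (-c1 + c1 * (r - w) * (y : ℂ)) + 2 * r * (c1 * (r - w)))
        (r ^ 2 * (c1 * (r - w))) x := by
      have hfe : (fun y : ℝ => r ^ 2 * (-c1 + c1 * (r - w) * (y : ℂ)) + 2 * r * (c1 * (r - w))) =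
          (fun y : ℝ => (r ^ 2 * (-c1) + 2 * r * (c1 * (r - w))) +
            (r ^ 2 * (c1 * (r - w))) * (y : ℂ)) := by
        funext y; ring
      rw [hfe]
      exact hasDerivAt_affine _ _ x
    have h2 := hlin3.mul (hasDerivAt_cexp_mul r x)
    convert h1.add h2 using 1
    · rfl
    · rfl
    simp only [hg1def, hg2def]
    linear_combination (-(c1 * Complex.exp (w * x))) * hrw +
      (-((-c1 + c1 * (r - w) * (x:ℂ)) * Complex.exp (r * x))) * hrr +
      (-(c1 * (r - w) * Complex.exp (r * x))) * h3r2
  have h01 : φ 0 = g1 0 := by simp [hg1def, h0]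
  have h02 : deriv φ 0 = g2 0 := by simp [hg2def, hd0]; ring
  have h03 : deriv (deriv φ) 0 = g3 0 := by
    simp [hg3def, ← haa]
    linear_combination -hc1sq
  have hkey := key_unique lam φ (deriv φ) (deriv (deriv φ)) g1 g2 g3 hf1 hf2 hf3 hg1 hg2 hg3
    h01 h02 h03 L ⟨hL.le, le_rfl⟩
  have eq1 : g1 L = 0 := by rw [← hkey.1, hLv]
  have eq2 : g2 L = 0 := by rw [← hkey.2, hdL]
  rw [hg1def] at eq1
  rw [hg2def] at eq2
  have hfin : a * (L : ℂ) * Complex.exp (r * L) = 0 := by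
    linear_combination eq2 - w * eq1 - ((L : ℂ) * Complex.exp (r * L)) * hc1sq
  have : (L : ℂ) ≠ 0 := Complex.ofReal_ne_zero.mpr hL.ne'
  simp [ha, this, Complex.exp_ne_zero] at hfin
end DoubleRoot

section Distinct

lemma distinct_case {L : ℝ} (hL : 0 < L) (hLN : L ∉ criticalSet) (lam : ℂ) (φ : ℝ → ℂ)
    (hf1 : ∀ x, HasDerivAt φ (deriv φ x) x)
    (hf2 : ∀ x, HasDerivAt (deriv φ) (deriv (deriv φ) x) x)
    (hf3 : ∀ x ∈ Icc (0:ℝ) L, HasDerivAt (deriv (deriv φ)) (-(deriv φ x) - lam * φ x) x)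
    (h0 : φ 0 = 0) (hd0 : deriv φ 0 = 0) (hLv : φ L = 0) (hdL : deriv φ L = 0)
    (r1 r2 r3 : ℂ) (h12 : r1 ≠ r2) (h13 : r1 ≠ r3) (h23 : r2 ≠ r3)
    (hsum : r1 + r2 + r3 = 0) (hq : r1 * r2 + r1 * r3 + r2 * r3 = 1)
    (hx1 : r1 ^ 3 + r1 + lam = 0) (hx2 : r2 ^ 3 + r2 + lam = 0)
    (hx3 : r3 ^ 3 + r3 + lam = 0) :
    deriv (deriv φ) 0 = 0 := by
  by_contra ha
  set a := deriv (deriv φ) 0 with haa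
  have d12 : r1 - r2 ≠ 0 := sub_ne_zero.mpr h12
  have d13 : r1 - r3 ≠ 0 := sub_ne_zero.mpr h13
  have d23 : r2 - r3 ≠ 0 := sub_ne_zero.mpr h23
  have d31 : r3 - r1 ≠ 0 := fun h => d13 (by linear_combination -h)
  set D : ℂ := -((r1 - r2) * (r2 - r3) * (r3 - r1)) with hD
  have hDne : D ≠ 0 := by
    rw [hD]
    exact neg_ne_zero.mpr (mul_ne_zero (mul_ne_zero d12 d23) d31)
  set b : ℂ := a / D with hb
  have hbD : b * D = a := by rw [hb]; field_simp
  have hbne : b ≠ 0 := by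
    intro h
    rw [h, zero_mul] at hbD
    exact ha hbD.symm
  set g1 : ℝ → ℂ := fun x => b * (r2 - r3) * Complex.exp (r1 * x) +
      b * (r3 - r1) * Complex.exp (r2 * x) + b * (r1 - r2) * Complex.exp (r3 * x) with hg1def
  set g2 : ℝ → ℂ := fun x => b * (r2 - r3) * r1 * Complex.exp (r1 * x) +
      b * (r3 - r1) * r2 * Complex.exp (r2 * x) + b * (r1 - r2) * r3 * Complex.exp (r3 * x)
      with hg2def
  set g3 : ℝ → ℂ := fun x => b * (r2 - r3) * r1 ^ 2 * Complex.exp (r1 * x) +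
      b * (r3 - r1) * r2 ^ 2 * Complex.exp (r2 * x) + b * (r1 - r2) * r3 ^ 2 * Complex.exp (r3 * x)
      with hg3def
  have hg1 : ∀ x, HasDerivAt g1 (g2 x) x := by
    intro x
    have h1 := (hasDerivAt_cexp_mul r1 x).const_mul (b * (r2 - r3))
    have h2 := (hasDerivAt_cexp_mul r2 x).const_mul (b * (r3 - r1))
    have h3 := (hasDerivAt_cexp_mul r3 x).const_mul (b * (r1 - r2))
    convert (h1.add h2).add h3 using 1
    · rfl
    · rfl
    rw [hg2def]; ring
  have hg2 : ∀ x, HasDerivAt g2 (g3 x) x := by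
    intro x
    have h1 := (hasDerivAt_cexp_mul r1 x).const_mul (b * (r2 - r3) * r1)
    have h2 := (hasDerivAt_cexp_mul r2 x).const_mul (b * (r3 - r1) * r2)
    have h3 := (hasDerivAt_cexp_mul r3 x).const_mul (b * (r1 - r2) * r3)
    convert (h1.add h2).add h3 using 1
    · rfl
    · rfl
    rw [hg3def]; ring
  have hg3 : ∀ x ∈ Icc (0:ℝ) L, HasDerivAt g3 (-g2 x - lam * g1 x) x := by
    intro x _
    have h1 := (hasDerivAt_cexp_mul r1 x).const_mul (b * (r2 - r3) * r1 ^ 2)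
    have h2 := (hasDerivAt_cexp_mul r2 x).const_mul (b * (r3 - r1) * r2 ^ 2)
    have h3 := (hasDerivAt_cexp_mul r3 x).const_mul (b * (r1 - r2) * r3 ^ 2)
    convert (h1.add h2).add h3 using 1
    · rfl
    · rfl
    rw [hg1def, hg2def]
    linear_combination (-(b * (r2 - r3) * Complex.exp (r1 * x))) * hx1 +
      (-(b * (r3 - r1) * Complex.exp (r2 * x))) * hx2 +
      (-(b * (r1 - r2) * Complex.exp (r3 * x))) * hx3
  have h01 : φ 0 = g1 0 := by
    rw [hg1def, h0]; simp; ring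
  have h02 : deriv φ 0 = g2 0 := by
    rw [hg2def, hd0]; simp; ring
  have h03 : deriv (deriv φ) 0 = g3 0 := by
    rw [hg3def, ← haa]; simp
    linear_combination -hbD
  have hkey := key_unique lam φ (deriv φ) (deriv (deriv φ)) g1 g2 g3 hf1 hf2 hf3 hg1 hg2 hg3
    h01 h02 h03 L ⟨hL.le, le_rfl⟩
  have eq1 : g1 L = 0 := by rw [← hkey.1, hLv]
  have eq2 : g2 L = 0 := by rw [← hkey.2, hdL]
  rw [hg1def] at eq1
  rw [hg2def] at eq2
  set E1 := Complex.exp (r1 * (L : ℂ)) with hE1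
  set E2 := Complex.exp (r2 * (L : ℂ)) with hE2
  set E3 := Complex.exp (r3 * (L : ℂ)) with hE3
  have hE12 : E1 = E2 := by
    have h' : b * (r2 - r3) * (r3 - r1) * (E1 - E2) = 0 := by
      linear_combination r3 * eq1 - eq2
    have h'' : E1 - E2 = 0 := by
      by_contra hne
      exact (mul_ne_zero (mul_ne_zero (mul_ne_zero hbne d23) d31) hne) h'
    linear_combination h''
  have hE23 : E2 = E3 := by
    have h' : b * (r1 - r2) * (r3 - r1) * (E2 - E3) = 0 := by
      linear_combination r1 * eq1 - eq2
    have h'' : E2 - E3 = 0 := by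
      by_contra hne
      exact (mul_ne_zero (mul_ne_zero (mul_ne_zero hbne d12) d31) hne) h'
    linear_combination h''
  have hLne : (L : ℂ) ≠ 0 := Complex.ofReal_ne_zero.mpr hL.ne'
  have hexp12 : Complex.exp ((r1 - r2) * L) = 1 := by
    rw [sub_mul, Complex.exp_sub, ← hE1, ← hE2, hE12, div_self (Complex.exp_ne_zero _)]
  have hexp23 : Complex.exp ((r2 - r3) * L) = 1 := by
    rw [sub_mul, Complex.exp_sub, ← hE2, ← hE3, hE23, div_self (Complex.exp_ne_zero _)]
  obtain ⟨k, hk⟩ := Complex.exp_eq_one_iff.mp hexp12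
  obtain ⟨l, hl⟩ := Complex.exp_eq_one_iff.mp hexp23
  have hkne : k ≠ 0 := by
    intro h
    rw [h] at hk
    simp at hk
    rcases hk with h' | h'
    · exact d12 (sub_eq_zero.mpr (sub_eq_zero.mp h'))
    · exact hL.ne' h'
  have hlne : l ≠ 0 := by
    intro h
    rw [h] at hl
    simp at hl
    rcases hl with h' | h'
    · exact d23 (sub_eq_zero.mpr (sub_eq_zero.mp h'))
    · exact hL.ne' h'
  have hkl : (r1 - r3) * L = ((k : ℂ) + l) * (2 * Real.pi * Complex.I) := by
    linear_combination hk + hl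
  have hklne : k + l ≠ 0 := by
    intro h
    have : ((k : ℂ) + l) = 0 := by exact_mod_cast congrArg (Int.cast : ℤ → ℂ) h
    rw [this, zero_mul] at hkl
    rcases mul_eq_zero.mp hkl with h' | h'
    · exact d13 h'
    · exact hLne h'
  have key : (r1 - r2) ^ 2 + (r2 - r3) ^ 2 + (r1 - r3) ^ 2 = -6 := by
    linear_combination 2 * (r1 + r2 + r3) * hsum - 6 * hq
  have f1 : ((r1 - r2) * (L : ℂ)) ^ 2 = -(2 * (Real.pi : ℂ) * k) ^ 2 := by
    rw [hk]
    linear_combination (4 * (Real.pi : ℂ) ^ 2 * (k : ℂ) ^ 2) * Complex.I_sq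
  have f2 : ((r2 - r3) * (L : ℂ)) ^ 2 = -(2 * (Real.pi : ℂ) * l) ^ 2 := by
    rw [hl]
    linear_combination (4 * (Real.pi : ℂ) ^ 2 * (l : ℂ) ^ 2) * Complex.I_sq
  have f3 : ((r1 - r3) * (L : ℂ)) ^ 2 = -(2 * (Real.pi : ℂ) * ((k : ℂ) + l)) ^ 2 := by
    rw [hkl]
    linear_combination (4 * (Real.pi : ℂ) ^ 2 * ((k : ℂ) + l) ^ 2) * Complex.I_sq
  have hC : (2 * (Real.pi : ℂ) * k) ^ 2 + (2 * (Real.pi : ℂ) * l) ^ 2 +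
      (2 * (Real.pi : ℂ) * ((k : ℂ) + l)) ^ 2 = 6 * (L : ℂ) ^ 2 := by
    linear_combination (-(L : ℂ) ^ 2) * key + f1 + f2 + f3
  have hR : (2 * Real.pi * (k : ℝ)) ^ 2 + (2 * Real.pi * (l : ℝ)) ^ 2 +
      (2 * Real.pi * ((k : ℝ) + l)) ^ 2 = 6 * L ^ 2 := by exact_mod_cast hC
  have hL2 : L ^ 2 = (2 * Real.pi) ^ 2 * (((k : ℝ) ^ 2 + k * l + l ^ 2) / 3) := by
    linear_combination -hR / 6
  obtain ⟨m, n, hm, hn, hpair⟩ := int_pair k l hkne hlne hklne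
  have hcast : ((k : ℝ) ^ 2 + k * l + l ^ 2) = ((m : ℝ) ^ 2 + m * n + n ^ 2) := by
    exact_mod_cast congrArg (Int.cast : ℤ → ℝ) hpair
  have hfinal : L = 2 * Real.pi * Real.sqrt (((m : ℝ) ^ 2 + m * n + n ^ 2) / 3) := by
    have h1 : L = Real.sqrt (L ^ 2) := (Real.sqrt_sq hL.le).symm
    rw [h1, hL2, hcast,
      Real.sqrt_mul (sq_nonneg _), Real.sqrt_sq (by positivity : (0:ℝ) ≤ 2 * Real.pi)]
  exact hLN ⟨m, n, hm, hn, hfinal⟩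

end Distinct

/-- Spectral unique continuation (Rosier): if `L` is not a critical length, any
eigenfunction `φ` of `φ ↦ −φ''' − φ'` with `φ(0) = φ(L) = φ'(0) = 0` that also
satisfies `φ'(L) = 0` vanishes identically on `(0, L)`. -/
theorem stmt7 (L : ℝ) (hL : 0 < L) (hLN : L ∉ criticalSet) (lam : ℂ) (φ : ℝ → ℂ)
    (hφ : ContDiff ℝ 3 φ) (h0 : φ 0 = 0) (hLv : φ L = 0) (hd0 : deriv φ 0 = 0)
    (heq : ∀ x ∈ Set.Ioo (0:ℝ) L, -iteratedDeriv 3 φ x - deriv φ x = lam * φ x)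
    (hdL : deriv φ L = 0) :
    ∀ x ∈ Set.Ioo (0:ℝ) L, φ x = 0 := by
  have hφ1 : ContDiff ℝ 2 (deriv φ) := by
    have h3 : ContDiff ℝ ((2 : WithTop ℕ∞) + 1) φ := by
      convert hφ using 2
      norm_num
    exact (contDiff_succ_iff_deriv.mp h3).2.2
  have hφ2 : ContDiff ℝ 1 (deriv (deriv φ)) := by
    have h2 : ContDiff ℝ ((1 : WithTop ℕ∞) + 1) (deriv φ) := by
      convert hφ1 using 2
      norm_num
    exact (contDiff_succ_iff_deriv.mp h2).2.2
  have hf1 : ∀ x, HasDerivAt φ (deriv φ x) x :=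
    fun x => (hφ.differentiable (by norm_num) x).hasDerivAt
  have hf2 : ∀ x, HasDerivAt (deriv φ) (deriv (deriv φ) x) x :=
    fun x => (hφ1.differentiable (by norm_num) x).hasDerivAt
  have hf3' : ∀ x, HasDerivAt (deriv (deriv φ)) (deriv (deriv (deriv φ)) x) x :=
    fun x => (hφ2.differentiable (by norm_num) x).hasDerivAt
  have hit3 : iteratedDeriv 3 φ = deriv (deriv (deriv φ)) := by
    simp [iteratedDeriv_succ, iteratedDeriv_zero]
  rw [hit3] at heq
  have hcont3 : Continuous (deriv (deriv (deriv φ))) := hφ2.continuous_deriv le_rfl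
  have heqIcc : ∀ x ∈ Set.Icc (0:ℝ) L,
      deriv (deriv (deriv φ)) x + deriv φ x + lam * φ x = 0 := by
    have hclosed : IsClosed {x : ℝ | deriv (deriv (deriv φ)) x + deriv φ x + lam * φ x = 0} :=
      isClosed_eq (((hcont3.add hφ1.continuous).add (continuous_const.mul hφ.continuous)))
        continuous_const
    have hsub : Set.Ioo (0:ℝ) L ⊆
        {x : ℝ | deriv (deriv (deriv φ)) x + deriv φ x + lam * φ x = 0} := by
      intro x hx
      have h := heq x hx
      show _ = _
      linear_combination -h
    have hIcc : Set.Icc (0:ℝ) L ⊆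
        {x : ℝ | deriv (deriv (deriv φ)) x + deriv φ x + lam * φ x = 0} := by
      rw [← closure_Ioo hL.ne]
      exact closure_minimal hsub hclosed
    exact fun x hx => hIcc hx
  have hf3 : ∀ x ∈ Set.Icc (0:ℝ) L,
      HasDerivAt (deriv (deriv φ)) (-(deriv φ x) - lam * φ x) x := by
    intro x hx
    have h := heqIcc x hx
    have hval : deriv (deriv (deriv φ)) x = -(deriv φ x) - lam * φ x := by
      linear_combination h
    rw [← hval]
    exact hf3' x
  obtain ⟨r1, r2, r3, hfac⟩ := cubic_factor lam
  have hsum : r1 + r2 + r3 = 0 := by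
    linear_combination (hfac 1) / 2 + (hfac (-1)) / 2 - hfac 0
  have hq : r1 * r2 + r1 * r3 + r2 * r3 = 1 := by
    linear_combination -(hfac 1) / 2 + (hfac (-1)) / 2
  have hx1 : r1 ^ 3 + r1 + lam = 0 := by linear_combination hfac r1
  have hx2 : r2 ^ 3 + r2 + lam = 0 := by linear_combination hfac r2
  have hx3 : r3 ^ 3 + r3 + lam = 0 := by linear_combination hfac r3
  have ha : deriv (deriv φ) 0 = 0 := by
    by_cases h12 : r1 = r2
    · exact double_case hL lam φ hf1 hf2 hf3 h0 hd0 hLv hdL r3 r1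
        (by linear_combination hsum + h12) (by linear_combination hq + (r1 + r3) * h12)
        hx3 hx1
    · by_cases h13 : r1 = r3
      · exact double_case hL lam φ hf1 hf2 hf3 h0 hd0 hLv hdL r2 r1
          (by linear_combination hsum + h13) (by linear_combination hq + (r1 + r2) * h13)
          hx2 hx1
      · by_cases h23 : r2 = r3
        · exact double_case hL lam φ hf1 hf2 hf3 h0 hd0 hLv hdL r1 r2
            (by linear_combination hsum + h23) (by linear_combination hq + (r1 + r2) * h23)
            hx1 hx2
        · exact distinct_case hL hLN lam φ hf1 hf2 hf3 h0 hd0 hLv hdL r1 r2 r3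
            h12 h13 h23 hsum hq hx1 hx2 hx3
  have hzero := key_unique lam φ (deriv φ) (deriv (deriv φ))
    (fun _ => 0) (fun _ => 0) (fun _ => 0) hf1 hf2 hf3
    (fun x => by simpa using hasDerivAt_const x (0:ℂ))
    (fun x => by simpa using hasDerivAt_const x (0:ℂ))
    (fun x _ => by simpa using hasDerivAt_const x (0:ℂ))
    h0 hd0 ha
  intro x hx
  exact (hzero x ⟨hx.1.le, hx.2.le⟩).1
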